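/- If A ∈ ℝ^{n×n} has all eigenvalues with positive real part, then there exists a symmetric positive definite Q with QA + AᵀQ = 2I. -/

import Mathlib

open Matrix

noncomputable section Stmt17Aux

variable {n : ℕ}

lemma stmt17_eval_charpoly (M : Matrix (Fin n) (Fin n) ℂ) (r : ℂ) :
    M.charpoly.eval r = (r • (1 : Matrix (Fin n) (Fin n) ℂ) - M).det := by
  rw [Matrix.charpoly, eval_det, matPolyEquiv_charmatrix]
  congr 1
  simp only [Polynomial.eval_sub, Polynomial.eval_X, Polynomial.eval_C]
  congr 1
  ext i j
  simp [Matrix.scalar_apply, Matrix.one_apply, Matrix.diagonal_apply, Matrix.smul_apply]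

lemma stmt17_not_isUnit_iff (M : Matrix (Fin n) (Fin n) ℂ) :
    ¬ IsUnit M ↔ M.det = 0 := by
  rw [Matrix.isUnit_iff_isUnit_det, isUnit_iff_ne_zero, not_ne_iff]

lemma stmt17_mem_spectrum_iff (M : Matrix (Fin n) (Fin n) ℂ) (r : ℂ) :
    r ∈ spectrum ℂ M ↔ (r • (1 : Matrix (Fin n) (Fin n) ℂ) - M).det = 0 := by
  rw [spectrum.mem_iff, Algebra.algebraMap_eq_smul_one, stmt17_not_isUnit_iff]

lemma stmt17_sylC (B : Matrix (Fin n) (Fin n) ℂ) (hB : ∀ μ ∈ spectrum ℂ B, 0 < μ.re)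
    (Y : Matrix (Fin n) (Fin n) ℂ) (hY : Y * B + B.transpose * Y = 0) : Y = 0 := by
  have hYB : Y * B = (-B.transpose) * Y := by
    rw [neg_mul]
    exact eq_neg_of_add_eq_zero_left hY
  have hpow : ∀ k : ℕ, Y * B ^ k = (-B.transpose) ^ k * Y := by
    intro k; induction k with
    | zero => simp
    | succ k ih =>
        rw [pow_succ, ← mul_assoc, ih, mul_assoc, hYB, ← mul_assoc, ← pow_succ]
  have haeval : ∀ p : Polynomial ℂ,
      Y * (Polynomial.aeval B p) = (Polynomial.aeval (-B.transpose) p) * Y := by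
    intro p
    induction p using Polynomial.induction_on' with
    | add p q hp hq => simp [map_add, mul_add, add_mul, hp, hq]
    | monomial k c =>
        simp [Polynomial.aeval_monomial, Algebra.algebraMap_eq_smul_one, smul_mul_assoc,
          mul_smul_comm, hpow k]
  have hchar := haeval B.charpoly
  rw [Matrix.aeval_self_charpoly, mul_zero] at hchar
  have hmonic : B.charpoly.Monic := Matrix.charpoly_monic B
  have hsplit : B.charpoly = (B.charpoly.roots.map fun a => Polynomial.X - Polynomial.C a).prod :=
    (IsAlgClosed.splits _).eq_prod_roots_of_monic hmonic
  have hunit : IsUnit (Polynomial.aeval (-B.transpose) B.charpoly) := by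
    rw [Matrix.isUnit_iff_isUnit_det, isUnit_iff_ne_zero]
    conv_lhs => rw [hsplit]
    have hhom := map_multiset_prod
      ((Matrix.detMonoidHom).comp (Polynomial.aeval (-B.transpose) :
          Polynomial ℂ →ₐ[ℂ] Matrix (Fin n) (Fin n) ℂ).toRingHom.toMonoidHom)
      (B.charpoly.roots.map fun a => Polynomial.X - Polynomial.C a)
    simp only [MonoidHom.comp_apply, RingHom.toMonoidHom_eq_coe,
      MonoidHom.coe_coe, AlgHom.toRingHom_eq_coe, RingHom.coe_coe,
      Matrix.coe_detMonoidHom] at hhom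
    rw [hhom, Multiset.map_map]
    apply Multiset.prod_ne_zero
    intro h0
    rw [Multiset.mem_map] at h0
    obtain ⟨μ, hμroot, hμ⟩ := h0
    -- hμ : det (aeval (-Bᵀ) (X - C μ)) = 0
    have hμspec : μ ∈ spectrum ℂ B := by
      rw [stmt17_mem_spectrum_iff]
      rw [← stmt17_eval_charpoly]
      exact Polynomial.isRoot_of_mem_roots hμroot
    have hμre : 0 < μ.re := hB μ hμspec
    have hform : (Polynomial.aeval (-B.transpose) (Polynomial.X - Polynomial.C μ)) =
        ((-μ) • (1 : Matrix (Fin n) (Fin n) ℂ) - B).transpose := by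
      simp only [map_sub, Polynomial.aeval_X, Polynomial.aeval_C,
        Algebra.algebraMap_eq_smul_one]
      rw [Matrix.transpose_sub, Matrix.transpose_smul, Matrix.transpose_one]
      ext i j
      simp [Matrix.sub_apply, Matrix.neg_apply, Matrix.smul_apply]
      ring
    change (Polynomial.aeval (-B.transpose) (Polynomial.X - Polynomial.C μ)).det = 0 at hμ
    rw [hform, Matrix.det_transpose] at hμ
    have : (-μ) ∈ spectrum ℂ B := by rw [stmt17_mem_spectrum_iff]; exact hμ
    have := hB _ this
    simp only [Complex.neg_re] at this
    linarith
  exact hunit.mul_left_cancel (by rw [← hchar, mul_zero])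


lemma stmt17_sylR (A : Matrix (Fin n) (Fin n) ℝ)
    (hA : ∀ μ ∈ spectrum ℂ (A.map (algebraMap ℝ ℂ)), 0 < μ.re)
    (Y : Matrix (Fin n) (Fin n) ℝ) (hY : Y * A + A.transpose * Y = 0) : Y = 0 := by
  have h2 : (Y.map (algebraMap ℝ ℂ)) * (A.map (algebraMap ℝ ℂ)) +
      (A.map (algebraMap ℝ ℂ)).transpose * (Y.map (algebraMap ℝ ℂ)) = 0 := by
    have h3 : (algebraMap ℝ ℂ).mapMatrix (Y * A + A.transpose * Y)
        = (algebraMap ℝ ℂ).mapMatrix 0 := by rw [hY]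
    rw [map_add, _root_.map_mul, _root_.map_mul, map_zero] at h3
    simpa [RingHom.mapMatrix_apply, Matrix.transpose_map] using h3
  have := stmt17_sylC (A.map (algebraMap ℝ ℂ)) hA _ h2
  ext i j
  have := congrFun (congrFun this i) j
  simpa [Matrix.map_apply] using this

/-- the Lyapunov operator as a linear map -/
def stmt17_lyapL (B : Matrix (Fin n) (Fin n) ℝ) :
    Matrix (Fin n) (Fin n) ℝ →ₗ[ℝ] Matrix (Fin n) (Fin n) ℝ where
  toFun Y := Y * B + B.transpose * Y
  map_add' Y Z := by
    simp only [add_mul, mul_add]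
    abel
  map_smul' c Y := by
    simp only [Matrix.smul_mul, Matrix.mul_smul, RingHom.id_apply, smul_add]

lemma stmt17_lyapL_apply (B Y : Matrix (Fin n) (Fin n) ℝ) :
    stmt17_lyapL B Y = Y * B + B.transpose * Y := rfl

lemma stmt17_lyapL_inj (B : Matrix (Fin n) (Fin n) ℝ)
    (hB : ∀ μ ∈ spectrum ℂ (B.map (algebraMap ℝ ℂ)), 0 < μ.re) :
    Function.Injective (stmt17_lyapL B) := by
  intro Y Z h
  have h0 : stmt17_lyapL B (Y - Z) = 0 := by rw [map_sub, h, sub_self]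
  have := stmt17_sylR B hB (Y - Z) h0
  exact sub_eq_zero.mp this

lemma stmt17_spec_convex (A : Matrix (Fin n) (Fin n) ℝ)
    (hA : ∀ μ ∈ spectrum ℂ (A.map (algebraMap ℝ ℂ)), 0 < μ.re)
    {t : ℝ} (h0 : 0 ≤ t) (h1 : t ≤ 1) :
    ∀ μ ∈ spectrum ℂ ((((1-t) • A + t • (1 : Matrix (Fin n) (Fin n) ℝ))).map (algebraMap ℝ ℂ)),
      0 < μ.re := by
  intro μ hμ
  set B : Matrix (Fin n) (Fin n) ℂ := A.map (algebraMap ℝ ℂ) with hB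
  have hmap : (((1-t) • A + t • (1 : Matrix (Fin n) (Fin n) ℝ))).map (algebraMap ℝ ℂ)
      = ((1-t : ℝ) : ℂ) • B + ((t : ℝ) : ℂ) • (1 : Matrix (Fin n) (Fin n) ℂ) := by
    ext i j
    simp only [Matrix.map_apply, Matrix.add_apply, Matrix.smul_apply, smul_eq_mul, hB,
      Matrix.one_apply, Complex.coe_algebraMap]
    split
    · push_cast; ring
    · push_cast; ring
  rw [hmap, spectrum.mem_iff, Algebra.algebraMap_eq_smul_one, stmt17_not_isUnit_iff] at hμ
  by_cases ht : t = 1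
  · subst ht
    norm_num at hμ
    have heq : μ • (1 : Matrix (Fin n) (Fin n) ℂ) - 1
        = (μ - 1) • (1 : Matrix (Fin n) (Fin n) ℂ) := by
      rw [sub_smul, one_smul]
    rw [heq, Matrix.det_smul, Matrix.det_one, mul_one] at hμ
    have h10 : μ - 1 = 0 := (pow_eq_zero_iff'.mp hμ).1
    have : μ = 1 := by
      have := sub_eq_zero.mp h10
      simpa using this
    simp [this]
  · have h1t : (0:ℝ) < 1 - t := by
      rcases lt_or_eq_of_le h1 with h | h
      · linarith
      · exact absurd h ht
    set ν : ℂ := (μ - (t:ℂ)) / ((1 - t : ℝ) : ℂ) with hν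
    have h1tC : ((1 - t : ℝ) : ℂ) ≠ 0 := by
      exact_mod_cast ne_of_gt h1t
    have hνmul : ((1 - t : ℝ) : ℂ) * ν = μ - (t:ℂ) := mul_div_cancel₀ _ h1tC
    have hkey : μ • (1 : Matrix (Fin n) (Fin n) ℂ) -
        (((1-t : ℝ) : ℂ) • B + ((t : ℝ) : ℂ) • (1 : Matrix (Fin n) (Fin n) ℂ))
        = ((1 - t : ℝ) : ℂ) • (ν • (1 : Matrix (Fin n) (Fin n) ℂ) - B) := by
      rw [smul_sub, smul_smul, hνmul, sub_smul]
      push_cast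
      abel
    rw [hkey, Matrix.det_smul] at hμ
    have hdetν : (ν • (1 : Matrix (Fin n) (Fin n) ℂ) - B).det = 0 := by
      rcases mul_eq_zero.mp hμ with h | h
      · exact absurd h (pow_ne_zero _ h1tC)
      · exact h
    have hνspec : ν ∈ spectrum ℂ B := (stmt17_mem_spectrum_iff B ν).mpr hdetν
    have hνre : 0 < ν.re := hA ν hνspec
    have hμν : μ = ((1 - t : ℝ) : ℂ) * ν + (t:ℂ) := by
      rw [hνmul]; ring
    have : μ.re = (1 - t) * ν.re + t := by
      rw [hμν]
      simp [Complex.add_re, Complex.mul_re, Complex.ofReal_re, Complex.ofReal_im]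
    rw [this]
    have := mul_pos h1t hνre
    linarith


lemma stmt17_quad_bound (D : Matrix (Fin n) (Fin n) ℝ) (x : Fin n → ℝ) :
    |x ⬝ᵥ D *ᵥ x| ≤ (∑ i, ∑ j, |D i j|) * (x ⬝ᵥ x) := by
  have hsq : ∀ i j : Fin n, |x i| * |x j| ≤ x ⬝ᵥ x := by
    intro i j
    have h2 : 2 * |x i| * |x j| ≤ |x i|^2 + |x j|^2 := two_mul_le_add_sq |x i| |x j|
    have hi : x i * x i ≤ x ⬝ᵥ x :=
      Finset.single_le_sum (f := fun k => x k * x k) (fun k _ => mul_self_nonneg _)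
        (Finset.mem_univ i)
    have hj : x j * x j ≤ x ⬝ᵥ x :=
      Finset.single_le_sum (f := fun k => x k * x k) (fun k _ => mul_self_nonneg _)
        (Finset.mem_univ j)
    nlinarith [sq_abs (x i), sq_abs (x j)]
  have habs : ∀ i j : Fin n, |x i * (D i j * x j)| ≤ |D i j| * (x ⬝ᵥ x) := by
    intro i j
    have : |x i * (D i j * x j)| = |D i j| * (|x i| * |x j|) := by
      rw [abs_mul, abs_mul]; ring
    rw [this]
    exact mul_le_mul_of_nonneg_left (hsq i j) (abs_nonneg _)
  calc |x ⬝ᵥ D *ᵥ x| = |∑ i, ∑ j, x i * (D i j * x j)| := by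
        simp [dotProduct, Matrix.mulVec, Finset.mul_sum]
    _ ≤ ∑ i, |∑ j, x i * (D i j * x j)| := Finset.abs_sum_le_sum_abs _ _
    _ ≤ ∑ i, ∑ j, |x i * (D i j * x j)| :=
        Finset.sum_le_sum fun i _ => Finset.abs_sum_le_sum_abs _ _
    _ ≤ ∑ i, ∑ j, |D i j| * (x ⬝ᵥ x) :=
        Finset.sum_le_sum fun i _ => Finset.sum_le_sum fun j _ => habs i j
    _ = (∑ i, ∑ j, |D i j|) * (x ⬝ᵥ x) := by
        rw [Finset.sum_mul]
        exact Finset.sum_congr rfl fun i _ => by rw [Finset.sum_mul]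

lemma stmt17_dotProduct_self_pos {x : Fin n → ℝ} (hx : x ≠ 0) : 0 < x ⬝ᵥ x := by
  rcases (Finset.sum_nonneg fun k _ => mul_self_nonneg (x k) :
      (0:ℝ) ≤ x ⬝ᵥ x).lt_or_eq with h | h
  · exact h
  · exact absurd (dotProduct_self_eq_zero.mp h.symm) hx

lemma stmt17_exists_lb {Q : Matrix (Fin n) (Fin n) ℝ} (hQ : Q.PosDef) :
    ∃ c : ℝ, 0 < c ∧ ∀ x : Fin n → ℝ, c * (x ⬝ᵥ x) ≤ x ⬝ᵥ Q *ᵥ x := by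
  rcases Nat.eq_zero_or_pos n with hn | hn
  · refine ⟨1, one_pos, fun x => ?_⟩
    subst hn
    simp [dotProduct]
  · haveI : Nonempty (Fin n) := ⟨⟨0, hn⟩⟩
    set e : EuclideanSpace ℝ (Fin n) ≃L[ℝ] (Fin n → ℝ) := EuclideanSpace.equiv (Fin n) ℝ with he
    set f : EuclideanSpace ℝ (Fin n) → ℝ := fun y => (e y) ⬝ᵥ Q *ᵥ (e y) with hf
    have hfc : Continuous f :=
      Continuous.dotProduct e.continuous (continuous_const.matrix_mulVec e.continuous)
    obtain ⟨x₀, hx₀mem, hx₀min'⟩ :=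
      (isCompact_sphere (0 : EuclideanSpace ℝ (Fin n)) 1).exists_isMinOn
        (NormedSpace.sphere_nonempty.mpr zero_le_one) hfc.continuousOn
    have hx₀min := isMinOn_iff.mp hx₀min'
    have hx₀norm : ‖x₀‖ = 1 := by simpa using mem_sphere_zero_iff_norm.mp hx₀mem
    have hx₀ne : e x₀ ≠ 0 := by
      intro h
      have h0 : x₀ = 0 := by
        apply e.injective
        simpa using h
      rw [h0] at hx₀norm
      simp at hx₀norm
    have hc : 0 < f x₀ := by
      have := hQ.dotProduct_mulVec_pos hx₀ne
      simpa [hf] using this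
    refine ⟨f x₀, hc, fun x => ?_⟩
    by_cases hx : x = 0
    · simp [hx]
    · have hxx : 0 < x ⬝ᵥ x := stmt17_dotProduct_self_pos hx
      set r : ℝ := Real.sqrt (x ⬝ᵥ x) with hr
      have hr0 : 0 < r := Real.sqrt_pos.mpr hxx
      have hrsq : r^2 = x ⬝ᵥ x := Real.sq_sqrt hxx.le
      set u : EuclideanSpace ℝ (Fin n) := r⁻¹ • e.symm x with hu
      have hue : e u = r⁻¹ • x := by
        rw [hu, _root_.map_smul, e.apply_symm_apply]
      have hnormx : ‖e.symm x‖ = r := by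
        rw [EuclideanSpace.norm_eq]
        have hco : ∀ i, (e.symm x) i = x i := fun i => rfl
        rw [hr]
        congr 1
        rw [dotProduct]
        refine Finset.sum_congr rfl fun i _ => ?_
        rw [hco i, Real.norm_eq_abs, sq_abs, sq]
      have humem : u ∈ Metric.sphere (0 : EuclideanSpace ℝ (Fin n)) 1 := by
        rw [mem_sphere_zero_iff_norm, hu, norm_smul, hnormx, Real.norm_eq_abs,
          abs_of_pos (inv_pos.mpr hr0), inv_mul_cancel₀ hr0.ne']
      have hmin := hx₀min u humem
      have hfu : f u = r⁻¹ * (r⁻¹ * (x ⬝ᵥ Q *ᵥ x)) := by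
        rw [hf]
        simp only [hue, smul_dotProduct, Matrix.mulVec_smul, dotProduct_smul,
          smul_eq_mul]
      rw [hfu] at hmin
      have h2 : f x₀ * r^2 ≤ x ⬝ᵥ Q *ᵥ x := by
        have hr2 : (0:ℝ) < r^2 := by positivity
        have hstep := mul_le_mul_of_nonneg_right hmin hr2.le
        have hinv : r⁻¹ * r = 1 := inv_mul_cancel₀ hr0.ne'
        have heq : r⁻¹ * (r⁻¹ * (x ⬝ᵥ Q *ᵥ x)) * r^2
            = (x ⬝ᵥ Q *ᵥ x) * ((r⁻¹ * r) * (r⁻¹ * r)) := by ring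
        calc f x₀ * r^2 ≤ r⁻¹ * (r⁻¹ * (x ⬝ᵥ Q *ᵥ x)) * r^2 := hstep
          _ = x ⬝ᵥ Q *ᵥ x := by rw [heq, hinv]; ring
      rw [hrsq] at h2
      exact h2

lemma stmt17_dich (Q : Matrix (Fin n) (Fin n) ℝ) (hsym : Q.transpose = Q)
    (hker : ∀ x : Fin n → ℝ, Q *ᵥ x = 0 → x = 0) :
    Q.PosDef ∨ ∃ x : Fin n → ℝ, x ≠ 0 ∧ x ⬝ᵥ Q *ᵥ x < 0 := by
  have hherm : Q.IsHermitian := by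
    rw [Matrix.IsHermitian, Matrix.conjTranspose_eq_transpose_of_trivial, hsym]
  by_cases hneg : ∃ x : Fin n → ℝ, x ≠ 0 ∧ x ⬝ᵥ Q *ᵥ x < 0
  · right; exact hneg
  · left
    push_neg at hneg
    have hpsd : Q.PosSemidef := by
      refine Matrix.PosSemidef.of_dotProduct_mulVec_nonneg hherm fun x => ?_
      rw [star_trivial]
      by_cases hx : x = 0
      · subst hx; simp
      · exact hneg x hx
    refine Matrix.posDef_iff_dotProduct_mulVec.mpr ⟨hherm, fun x hx => ?_⟩
    rw [star_trivial]
    have h0 : 0 ≤ x ⬝ᵥ Q *ᵥ x := by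
      have := hpsd.dotProduct_mulVec_nonneg x
      rwa [star_trivial] at this
    rcases h0.lt_or_eq with hlt | heq
    · exact hlt
    · exfalso
      have hz : Q *ᵥ x = 0 := by
        apply (hpsd.dotProduct_mulVec_zero_iff x).mp
        rw [star_trivial]
        exact heq.symm
      exact hx (hker x hz)

end Stmt17Aux

theorem stmt_17 (n : ℕ) (A : Matrix (Fin n) (Fin n) ℝ)
    (hA : ∀ μ ∈ spectrum ℂ (A.map (algebraMap ℝ ℂ)), 0 < μ.re) :
    ∃ Q : Matrix (Fin n) (Fin n) ℝ, Q.transpose = Q ∧ Q.PosDef ∧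
      Q * A + A.transpose * Q = 2 • (1 : Matrix (Fin n) (Fin n) ℝ) := by
  classical
  set τ : ℝ → ℝ := fun s => max 0 (min 1 s) with hτ
  have hτc : Continuous τ := continuous_const.max (continuous_const.min continuous_id)
  have hτ0 : ∀ s, 0 ≤ τ s := fun s => le_max_left _ _
  have hτ1 : ∀ s, τ s ≤ 1 := fun s => max_le zero_le_one (min_le_left _ _)
  set As : ℝ → Matrix (Fin n) (Fin n) ℝ := fun s => (1 - τ s) • A + τ s • 1 with hAs
  have hspec : ∀ s, ∀ μ ∈ spectrum ℂ ((As s).map (algebraMap ℝ ℂ)), 0 < μ.re :=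
    fun s => stmt17_spec_convex A hA (hτ0 s) (hτ1 s)
  have hinj : ∀ s, Function.Injective (stmt17_lyapL (As s)) :=
    fun s => stmt17_lyapL_inj _ (hspec s)
  have hsurj : ∀ s, Function.Surjective (stmt17_lyapL (As s)) :=
    fun s => LinearMap.injective_iff_surjective.mp (hinj s)
  set b : Module.Basis (Fin n × Fin n) ℝ (Matrix (Fin n) (Fin n) ℝ) :=
    Matrix.stdBasis ℝ (Fin n) (Fin n) with hb
  set Mf : ℝ → Matrix (Fin n × Fin n) (Fin n × Fin n) ℝ :=
    fun s => LinearMap.toMatrix b b (stmt17_lyapL (As s)) with hMf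
  have hlyap_split : ∀ s, stmt17_lyapL (As s)
      = (1 - τ s) • stmt17_lyapL A + τ s • stmt17_lyapL (1 : Matrix (Fin n) (Fin n) ℝ) := by
    intro s
    apply LinearMap.ext
    intro Y
    simp only [stmt17_lyapL_apply, LinearMap.add_apply, LinearMap.smul_apply, hAs,
      Matrix.transpose_add, Matrix.transpose_smul, Matrix.add_mul, Matrix.mul_add,
      Matrix.smul_mul, Matrix.mul_smul, smul_add]
    abel
  have hMf_eq : Mf = fun s => (1 - τ s) • (LinearMap.toMatrix b b (stmt17_lyapL A))
      + τ s • (LinearMap.toMatrix b b (stmt17_lyapL (1 : Matrix (Fin n) (Fin n) ℝ))) := by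
    funext s
    rw [hMf]
    simp only [hlyap_split s, map_add, _root_.map_smul]
  have hMfc : Continuous Mf := by
    rw [hMf_eq]
    exact (((continuous_const.sub hτc).smul continuous_const).add
      (hτc.smul continuous_const))
  have hMdet : ∀ s, (Mf s).det ≠ 0 := by
    intro s
    set e := LinearEquiv.ofBijective _ ⟨hinj s, hsurj s⟩ with he
    have hcomp : (stmt17_lyapL (As s)).comp (e.symm : _ →ₗ[ℝ] _) = LinearMap.id := by
      apply LinearMap.ext
      intro Y
      exact e.apply_symm_apply Y
    have h1 : Mf s * LinearMap.toMatrix b b (e.symm : _ →ₗ[ℝ] _) = 1 := by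
      rw [hMf]
      rw [← LinearMap.toMatrix_comp b b b, hcomp, LinearMap.toMatrix_id]
    have hdet := congrArg Matrix.det h1
    rw [Matrix.det_mul, Matrix.det_one] at hdet
    exact left_ne_zero_of_mul_eq_one hdet
  set v : Fin n × Fin n → ℝ := b.equivFun (2 • (1 : Matrix (Fin n) (Fin n) ℝ)) with hv
  set q : ℝ → (Fin n × Fin n → ℝ) :=
    fun s => ((Mf s).det)⁻¹ • ((Mf s).adjugate *ᵥ v) with hq
  set Qf : ℝ → Matrix (Fin n) (Fin n) ℝ := fun s => b.equivFun.symm (q s) with hQf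
  have hMq : ∀ s, (Mf s) *ᵥ (q s) = v := by
    intro s
    rw [hq]
    simp only
    rw [Matrix.mulVec_smul, Matrix.mulVec_mulVec, Matrix.mul_adjugate,
      Matrix.smul_mulVec, Matrix.one_mulVec, smul_smul,
      inv_mul_cancel₀ (hMdet s), one_smul]
  have hQrepr : ∀ s, ⇑(b.repr (Qf s)) = q s := by
    intro s
    rw [hQf]
    simp only
    rw [← Module.Basis.equivFun_apply]
    rw [b.equivFun.apply_symm_apply]
  have hQeq : ∀ s, stmt17_lyapL (As s) (Qf s) = 2 • (1 : Matrix (Fin n) (Fin n) ℝ) := by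
    intro s
    have hrel := LinearMap.toMatrix_mulVec_repr b b (stmt17_lyapL (As s)) (Qf s)
    rw [hQrepr s] at hrel
    have hrel2 : ⇑(b.repr ((stmt17_lyapL (As s)) (Qf s))) = v := by
      rw [← hrel]
      exact hMq s
    apply b.repr.injective
    apply DFunLike.coe_injective
    show ⇑(b.repr _) = ⇑(b.repr _)
    rw [hrel2, hv, ← Module.Basis.equivFun_apply]
  have hQsymm : ∀ s, (Qf s).transpose = Qf s := by
    intro s
    apply hinj s
    have h1 : stmt17_lyapL (As s) (Qf s).transpose
        = (stmt17_lyapL (As s) (Qf s)).transpose := by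
      simp only [stmt17_lyapL_apply, Matrix.transpose_add, Matrix.transpose_mul,
        Matrix.transpose_transpose]
      abel
    rw [h1, hQeq s, Matrix.transpose_smul, Matrix.transpose_one]
  have h21 : (2 • (1 : Matrix (Fin n) (Fin n) ℝ)) = (2:ℝ) • 1 :=
    (Nat.cast_smul_eq_nsmul ℝ 2 (1 : Matrix (Fin n) (Fin n) ℝ)).symm
  have hQker : ∀ s x, (Qf s) *ᵥ x = 0 → x = 0 := by
    intro s x hx
    have h := congrArg (fun M => x ⬝ᵥ M *ᵥ x) (hQeq s)
    simp only [stmt17_lyapL_apply] at h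
    rw [Matrix.add_mulVec, dotProduct_add] at h
    rw [← Matrix.mulVec_mulVec, ← Matrix.mulVec_mulVec] at h
    have hterm1 : x ⬝ᵥ (Qf s) *ᵥ ((As s) *ᵥ x) = 0 := by
      rw [Matrix.dotProduct_mulVec]
      have : Matrix.vecMul x (Qf s) = (Qf s) *ᵥ x := by
        conv_lhs => rw [← hQsymm s]
        rw [Matrix.vecMul_transpose]
      rw [this, hx, zero_dotProduct]
    have hterm2 : x ⬝ᵥ (As s).transpose *ᵥ ((Qf s) *ᵥ x) = 0 := by
      rw [hx, Matrix.mulVec_zero, dotProduct_zero]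
    rw [hterm1, hterm2] at h
    rw [h21, Matrix.smul_mulVec, Matrix.one_mulVec, dotProduct_smul,
      smul_eq_mul] at h
    have hxx : x ⬝ᵥ x = 0 := by linarith [h.symm]
    exact dotProduct_self_eq_zero.mp hxx
  have hqc : Continuous q := by
    rw [hq]
    exact ((hMfc.matrix_det).inv₀ hMdet).smul
      ((hMfc.matrix_adjugate).matrix_mulVec continuous_const)
  have hQc : Continuous Qf := by
    rw [hQf]
    exact (LinearMap.continuous_of_finiteDimensional
      (b.equivFun.symm.toLinearMap)).comp hqc
  have hquadc : ∀ x : Fin n → ℝ, Continuous fun s => x ⬝ᵥ (Qf s) *ᵥ x := fun x =>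
    Continuous.dotProduct continuous_const (hQc.matrix_mulVec continuous_const)
  have hτat1 : τ 1 = 1 := by norm_num [hτ]
  have hτat0 : τ 0 = 0 := by norm_num [hτ]
  have hAs1 : As 1 = 1 := by rw [hAs]; simp [hτat1]
  have hAs0 : As 0 = A := by rw [hAs]; simp [hτat0]
  have hQf1 : Qf 1 = 1 := by
    apply hinj 1
    rw [hQeq 1, stmt17_lyapL_apply, hAs1]
    simp [two_smul]
  set U : Set ℝ := {s | (Qf s).PosDef} with hU
  have hUopen : IsOpen U := by
    rw [isOpen_iff_mem_nhds]
    intro s₀ hs₀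
    obtain ⟨c, hc, hlb⟩ := stmt17_exists_lb hs₀
    have hgc : Continuous fun s => ∑ i, ∑ j, |Qf s i j - Qf s₀ i j| := by
      apply continuous_finset_sum
      intro i _
      apply continuous_finset_sum
      intro j _
      exact ((hQc.matrix_elem i j).sub continuous_const).abs
    have hopen : IsOpen {s | (∑ i, ∑ j, |Qf s i j - Qf s₀ i j|) < c} :=
      isOpen_lt hgc continuous_const
    have hmemnhds : {s | (∑ i, ∑ j, |Qf s i j - Qf s₀ i j|) < c} ∈ nhds s₀ := by
      apply hopen.mem_nhds
      simp only [Set.mem_setOf_eq]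
      have : (∑ i, ∑ j, |Qf s₀ i j - Qf s₀ i j|) = 0 := by simp
      rw [this]
      exact hc
    filter_upwards [hmemnhds] with s hs
    have hherm : (Qf s).IsHermitian := by
      rw [Matrix.IsHermitian, Matrix.conjTranspose_eq_transpose_of_trivial, hQsymm s]
    refine Matrix.posDef_iff_dotProduct_mulVec.mpr ⟨hherm, fun x hx => ?_⟩
    rw [star_trivial]
    have h1 : c * (x ⬝ᵥ x) ≤ x ⬝ᵥ (Qf s₀) *ᵥ x := hlb x
    have h2 : |x ⬝ᵥ (Qf s - Qf s₀) *ᵥ x| ≤ (∑ i, ∑ j, |(Qf s - Qf s₀) i j|) * (x ⬝ᵥ x) :=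
      stmt17_quad_bound _ x
    have hsplit : x ⬝ᵥ (Qf s) *ᵥ x
        = x ⬝ᵥ (Qf s₀) *ᵥ x + x ⬝ᵥ (Qf s - Qf s₀) *ᵥ x := by
      rw [Matrix.sub_mulVec, dotProduct_sub]
      ring
    have hxx : 0 < x ⬝ᵥ x := stmt17_dotProduct_self_pos hx
    have hsum_eq : (∑ i, ∑ j, |(Qf s - Qf s₀) i j|) = ∑ i, ∑ j, |Qf s i j - Qf s₀ i j| := by
      refine Finset.sum_congr rfl fun i _ => Finset.sum_congr rfl fun j _ => ?_
      rw [Matrix.sub_apply]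
    rw [hsum_eq] at h2
    have habs := abs_le.mp h2
    rw [hsplit]
    nlinarith [hs, habs.1, habs.2]
  set V : Set ℝ := {s | ∃ x : Fin n → ℝ, x ≠ 0 ∧ x ⬝ᵥ (Qf s) *ᵥ x < 0} with hV
  have hVopen : IsOpen V := by
    have : V = ⋃ x : Fin n → ℝ, {s | x ≠ 0 ∧ x ⬝ᵥ (Qf s) *ᵥ x < 0} := by
      ext s
      simp [hV, Set.mem_iUnion]
    rw [this]
    apply isOpen_iUnion
    intro x
    by_cases hx : x = 0
    · have hempty : {s | x ≠ 0 ∧ x ⬝ᵥ (Qf s) *ᵥ x < 0} = ∅ := by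
        ext s; simp [hx]
      rw [hempty]
      exact isOpen_empty
    · have : {s | x ≠ 0 ∧ x ⬝ᵥ (Qf s) *ᵥ x < 0} = {s | x ⬝ᵥ (Qf s) *ᵥ x < 0} := by
        ext s; simp [hx]
      rw [this]
      exact isOpen_lt (hquadc x) continuous_const
  have hUc : Uᶜ = V := by
    ext s
    simp only [Set.mem_compl_iff, hU, hV, Set.mem_setOf_eq]
    constructor
    · intro hnpd
      rcases stmt17_dich (Qf s) (hQsymm s) (hQker s) with h | h
      · exact absurd h hnpd
      · exact h
    · rintro ⟨x, hx, hneg⟩ hpd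
      have := hpd.dotProduct_mulVec_pos hx
      rw [star_trivial] at this
      linarith
  have hclopen : IsClopen U := by
    constructor
    · rw [← isOpen_compl_iff, hUc]
      exact hVopen
    · exact hUopen
  rcases isClopen_iff.mp hclopen with h | h
  · exfalso
    have h1U : (1:ℝ) ∈ U := by
      rw [hU]
      simp only [Set.mem_setOf_eq, hQf1]
      exact Matrix.PosDef.one
    rw [h] at h1U
    exact h1U
  · have h0U : (0:ℝ) ∈ U := by rw [h]; trivial
    refine ⟨Qf 0, hQsymm 0, h0U, ?_⟩
    have := hQeq 0
    rwa [hAs0, stmt17_lyapL_apply] at this
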